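/- Let T, T' > 0 and suppose (c_k)_{k≥1} is a strictly increasing sequence with values in {nT + n'T' : n, n' ∈ ℕ} and lim_{k→∞} c_k²/k = 2V for some V > 0. Then V ≥ TT'. -/

import Mathlib

open Finset Filter

lemma tri_count13 (T T' d : ℝ) (hT : 0 < T) (hT' : 0 < T') :
    ((((Finset.range (Nat.floor (d/T))) ×ˢ (Finset.range (Nat.floor (d/T')))).filter
      (fun p : ℕ × ℕ => ((p.1 : ℝ)+1) * T + ((p.2 : ℝ)+1) * T' ≤ d)).card : ℝ)
      ≤ d^2/(2*T*T') := by
  set M := Nat.floor (d/T) with hM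
  set S := (((Finset.range M) ×ˢ (Finset.range (Nat.floor (d/T')))).filter
      (fun p : ℕ × ℕ => ((p.1 : ℝ)+1) * T + ((p.2 : ℝ)+1) * T' ≤ d)) with hS
  have hcard : S.card = ∑ m ∈ range M, (S.filter (fun p => p.1 = m)).card := by
    apply Finset.card_eq_sum_card_fiberwise
    intro p hp
    rw [hS, Finset.mem_coe, Finset.mem_filter, Finset.mem_product] at hp
    exact hp.1.1
  have hfiber : ∀ m ∈ range M,
      ((S.filter (fun p => p.1 = m)).card : ℝ) ≤ (d - ((m:ℝ)+1)*T)/T' := by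
    intro m hm
    have hmM : m < M := Finset.mem_range.mp hm
    have hMd : (M : ℝ) ≤ d / T := by
      apply Nat.floor_le
      by_contra h
      push_neg at h
      have : M = 0 := Nat.floor_of_nonpos h.le
      omega
    have hMd2 : (M:ℝ) * T ≤ d := (le_div_iff₀ hT).mp hMd
    have hx0 : 0 ≤ (d - ((m:ℝ)+1)*T) := by
      have h1 : ((m:ℝ)+1) ≤ (M:ℝ) := by exact_mod_cast hmM
      nlinarith
    have hsub : (S.filter (fun p => p.1 = m)).image Prod.snd ⊆
        range (Nat.floor ((d - ((m:ℝ)+1)*T)/T')) := by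
      intro n hn
      simp only [Finset.mem_image] at hn
      obtain ⟨p, hp, hpn⟩ := hn
      rw [Finset.mem_filter] at hp
      obtain ⟨hp1, hp2⟩ := hp
      rw [hS, Finset.mem_filter] at hp1
      have hle : ((p.2:ℝ)+1) * T' ≤ d - ((m:ℝ)+1)*T := by
        have := hp1.2
        rw [hp2] at this
        linarith
      have h2 : ((p.2:ℝ)+1) ≤ (d - ((m:ℝ)+1)*T)/T' := by
        rw [le_div_iff₀ hT']
        linarith
      have hfl : p.2 + 1 ≤ Nat.floor ((d - ((m:ℝ)+1)*T)/T') := by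
        apply Nat.le_floor
        exact_mod_cast h2
      rw [Finset.mem_range, ← hpn]
      omega
    have hinj : (S.filter (fun p => p.1 = m)).card =
        ((S.filter (fun p => p.1 = m)).image Prod.snd).card := by
      rw [Finset.card_image_of_injOn]
      intro p hp q hq hpq
      rw [Finset.mem_coe, Finset.mem_filter] at hp hq
      exact Prod.ext (hp.2.trans hq.2.symm) hpq
    have hcl : ((S.filter (fun p => p.1 = m)).image Prod.snd).card
        ≤ Nat.floor ((d - ((m:ℝ)+1)*T)/T') := by
      have := Finset.card_le_card hsub
      rwa [Finset.card_range] at this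
    calc ((S.filter (fun p => p.1 = m)).card : ℝ)
        = (((S.filter (fun p => p.1 = m)).image Prod.snd).card : ℝ) := by rw [hinj]
      _ ≤ (Nat.floor ((d - ((m:ℝ)+1)*T)/T') : ℝ) := by exact_mod_cast hcl
      _ ≤ (d - ((m:ℝ)+1)*T)/T' := Nat.floor_le (by positivity)
  have hsum : (S.card : ℝ) ≤ ∑ m ∈ range M, (d - ((m:ℝ)+1)*T)/T' := by
    rw [hcard]
    push_cast
    exact Finset.sum_le_sum hfiber
  have hgauss : ∑ m ∈ range M, ((m:ℝ)+1) = (M:ℝ)*((M:ℝ)+1)/2 := by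
    induction M with
    | zero => simp
    | succ n ih => rw [Finset.sum_range_succ, ih]; push_cast; ring
  have hsum2 : ∑ m ∈ range M, (d - ((m:ℝ)+1)*T)/T'
      = ((M:ℝ)*d - ((M:ℝ)*((M:ℝ)+1)/2)*T)/T' := by
    rw [← Finset.sum_div, Finset.sum_sub_distrib, ← Finset.sum_mul, hgauss,
      Finset.sum_const, Finset.card_range, nsmul_eq_mul]
  have key : ((M:ℝ)*d - ((M:ℝ)*((M:ℝ)+1)/2)*T)/T' ≤ d^2/(2*T*T') := by
    rw [div_le_div_iff₀ hT' (by positivity)]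
    nlinarith [sq_nonneg (d - T*(M:ℝ)), mul_nonneg (mul_nonneg (mul_nonneg hT.le hT.le)
      (Nat.cast_nonneg M : (0:ℝ) ≤ M)) hT'.le]
  rw [hsum2] at hsum
  exact hsum.trans key

theorem stmt13 (T T' : ℝ) (hT : 0 < T) (hT' : 0 < T') (c : ℕ → ℝ)
    (hmono : StrictMono c)
    (hmem : ∀ k, ∃ n n' : ℕ, c k = n * T + n' * T')
    (V : ℝ) (hV : 0 < V)
    (hlim : Filter.Tendsto (fun k : ℕ => c k ^ 2 / k) Filter.atTop (nhds (2 * V))) :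
    T * T' ≤ V := by
  choose n n' hnn' using hmem
  have hc0 : ∀ k, 0 ≤ c k := by
    intro k
    rw [hnn']
    positivity
  -- key counting inequality
  have key : ∀ k : ℕ, (k : ℝ) + 1 ≤ (c k + T + T')^2 / (2*T*T') := by
    intro k
    set d := c k + T + T' with hd
    set S := (((Finset.range (Nat.floor (d/T))) ×ˢ (Finset.range (Nat.floor (d/T')))).filter
      (fun p : ℕ × ℕ => ((p.1 : ℝ)+1) * T + ((p.2 : ℝ)+1) * T' ≤ d)) with hS
    have hcount : (Finset.range (k+1)).card ≤ S.card := by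
      apply Finset.card_le_card_of_injOn (fun j => (n j, n' j))
      · intro j hj
        have hjk : j ≤ k := by
          have := Finset.mem_range.mp hj; omega
        have hcj : c j ≤ c k := hmono.monotone hjk
        have hsum : (n j : ℝ) * T + (n' j : ℝ) * T' = c j := (hnn' j).symm
        have hn1 : ((n j : ℝ) + 1) * T ≤ d := by nlinarith [(Nat.cast_nonneg (n' j) : (0:ℝ) ≤ (n' j : ℝ))]
        have hn2 : ((n' j : ℝ) + 1) * T' ≤ d := by nlinarith [(Nat.cast_nonneg (n j) : (0:ℝ) ≤ (n j : ℝ))]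
        rw [hS, Finset.mem_coe, Finset.mem_filter, Finset.mem_product]
        refine ⟨⟨Finset.mem_range.mpr ?_, Finset.mem_range.mpr ?_⟩, ?_⟩
        · have : n j + 1 ≤ Nat.floor (d/T) := by
            apply Nat.le_floor
            rw [le_div_iff₀ hT]
            push_cast
            linarith
          exact this
        · have : n' j + 1 ≤ Nat.floor (d/T') := by
            apply Nat.le_floor
            rw [le_div_iff₀ hT']
            push_cast
            linarith
          exact this
        · simp only
          nlinarith
      · intro i hi j hj hij
        apply hmono.injective
        rw [hnn' i, hnn' j]
        simp only [Prod.mk.injEq] at hij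
        rw [hij.1, hij.2]
    have := tri_count13 T T' d hT hT'
    rw [← hS] at this
    calc (k : ℝ) + 1 = ((Finset.range (k+1)).card : ℝ) := by simp
      _ ≤ (S.card : ℝ) := by exact_mod_cast hcount
      _ ≤ d^2/(2*T*T') := this
  -- eventually bound
  have hineq : ∀ k : ℕ, 1 ≤ k → 2*T*T' ≤ (c k + T + T')^2 / k := by
    intro k hk
    have hkpos : (0:ℝ) < k := by exact_mod_cast hk
    rw [le_div_iff₀ hkpos]
    have h1 := key k
    rw [le_div_iff₀ (by positivity : (0:ℝ) < 2*T*T')] at h1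
    nlinarith [mul_pos hT hT']
  -- c k / k → 0
  have ha : Tendsto (fun k : ℕ => c k / k) atTop (nhds 0) := by
    have hsq2 : Tendsto (fun k : ℕ => (c k / k)^2) atTop (nhds 0) := by
      have h := hlim.mul tendsto_one_div_atTop_nhds_zero_nat
      rw [mul_zero] at h
      apply h.congr
      intro k
      rw [div_pow, sq (k:ℝ), div_mul_div_comm, mul_one]
    have h2 := (Real.continuous_sqrt.tendsto 0).comp hsq2
    rw [Real.sqrt_zero] at h2
    apply h2.congr
    intro k
    exact Real.sqrt_sq (div_nonneg (hc0 k) (Nat.cast_nonneg k))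
  -- limit of shifted sequence
  have hg : Tendsto (fun k : ℕ => (c k + T + T')^2 / k) atTop (nhds (2*V)) := by
    have hexp : ∀ k : ℕ, (c k + T + T')^2 / k
        = c k^2/k + (2*(T+T'))*(c k/k) + (T+T')^2*(1/(k:ℝ)) := by
      intro k
      rw [show (c k + T + T')^2 = c k^2 + (2*(T+T'))*c k + (T+T')^2 by ring,
        add_div, add_div, mul_div_assoc, mul_one_div]
    have := (hlim.add (ha.const_mul (2*(T+T')))).add
      (tendsto_one_div_atTop_nhds_zero_nat.const_mul ((T+T')^2))
    simp only [mul_zero, add_zero] at this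
    exact this.congr (fun k => (hexp k).symm)
  have hfin : 2*T*T' ≤ 2*V :=
    ge_of_tendsto hg (Filter.eventually_atTop.mpr ⟨1, hineq⟩)
  linarith
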